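/- Let M = 2^(2λ) with λ ≥ 1 and let S be the square M-QAM signal set. Then every z ∈ ℂ with |z| ≤ 1/(√(2M) + 1 - √2) belongs to the clustering independent region Γ_CI(S). -/

import Mathlib

set_option maxHeartbeats 1000000

/-- For square `M`-QAM (`M = 2^(2λ)`, `d_min(S) = 2`), every `z ∈ ℂ`
with `|z| ≤ 1/(√(2M) + 1 - √2)` belongs to the clustering independent region
`Γ_CI(S)`. -/
theorem qam_small_abs_clustering_independent (l : ℕ) (hl : 1 ≤ l)
    (S : Finset ℂ)
    (hS : S = ((Finset.range (2 ^ l)) ×ˢ (Finset.range (2 ^ l))).image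
      (fun p : ℕ × ℕ =>
        (2 * (p.1 : ℂ) - ((2 : ℂ) ^ l - 1)) + (2 * (p.2 : ℂ) - ((2 : ℂ) ^ l - 1)) * Complex.I))
    (ΔS : Finset ℂ)
    (hΔS : ΔS = (S ×ˢ S).image (fun p : ℂ × ℂ => p.1 - p.2))
    (Γ : Set ℂ)
    (hΓ : Γ = {z : ℂ | ∀ d ∈ ΔS, ∀ d' ∈ ΔS, ¬(d = 0 ∧ d' = 0) →
      min 2 (‖z‖ * 2) ≤ ‖d + z * d'‖}) :
    ∀ z : ℂ,
      ‖z‖ ≤ 1 / (Real.sqrt (2 * 2 ^ (2 * l)) + 1 - Real.sqrt 2) → z ∈ Γ := by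
  intro z hz
  -- structure of elements of ΔS
  have hstruct : ∀ d ∈ ΔS, ∃ a b : ℤ,
      d = 2 * (a : ℂ) + 2 * (b : ℂ) * Complex.I ∧
      |(a : ℝ)| ≤ (2 : ℝ) ^ l - 1 ∧ |(b : ℝ)| ≤ (2 : ℝ) ^ l - 1 := by
    intro d hd
    rw [hΔS] at hd
    obtain ⟨p, hp, rfl⟩ := Finset.mem_image.mp hd
    obtain ⟨hp1, hp2⟩ := Finset.mem_product.mp hp
    rw [hS] at hp1 hp2
    obtain ⟨q, hq, hq1⟩ := Finset.mem_image.mp hp1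
    obtain ⟨w, hw, hw1⟩ := Finset.mem_image.mp hp2
    obtain ⟨hq1', hq2'⟩ := Finset.mem_product.mp hq
    obtain ⟨hw1', hw2'⟩ := Finset.mem_product.mp hw
    rw [Finset.mem_range] at hq1' hq2' hw1' hw2'
    have c1 : ((q.1 : ℝ)) + 1 ≤ (2:ℝ) ^ l := by exact_mod_cast Nat.succ_le_of_lt hq1'
    have c2 : ((q.2 : ℝ)) + 1 ≤ (2:ℝ) ^ l := by exact_mod_cast Nat.succ_le_of_lt hq2'
    have c3 : ((w.1 : ℝ)) + 1 ≤ (2:ℝ) ^ l := by exact_mod_cast Nat.succ_le_of_lt hw1'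
    have c4 : ((w.2 : ℝ)) + 1 ≤ (2:ℝ) ^ l := by exact_mod_cast Nat.succ_le_of_lt hw2'
    have n1 : (0:ℝ) ≤ (q.1 : ℝ) := Nat.cast_nonneg _
    have n2 : (0:ℝ) ≤ (q.2 : ℝ) := Nat.cast_nonneg _
    have n3 : (0:ℝ) ≤ (w.1 : ℝ) := Nat.cast_nonneg _
    have n4 : (0:ℝ) ≤ (w.2 : ℝ) := Nat.cast_nonneg _
    refine ⟨(q.1 : ℤ) - (w.1 : ℤ), (q.2 : ℤ) - (w.2 : ℤ), ?_, ?_, ?_⟩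
    · rw [← hq1, ← hw1]
      push_cast
      ring
    · rw [abs_le]
      constructor <;> push_cast <;> linarith
    · rw [abs_le]
      constructor <;> push_cast <;> linarith
  -- basic real facts
  have hNr : (1 : ℝ) ≤ (2:ℝ) ^ l := by exact_mod_cast Nat.one_le_two_pow (n := l)
  have hsqrt2 : (1:ℝ) ≤ Real.sqrt 2 := by
    rw [show (1:ℝ) = Real.sqrt 1 by simp]
    exact Real.sqrt_le_sqrt (by norm_num)
  have hsq2 : Real.sqrt 2 ^ 2 = 2 := Real.sq_sqrt (by norm_num)
  -- rewrite the denominator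
  have hden : Real.sqrt (2 * 2 ^ (2 * l)) = Real.sqrt 2 * 2 ^ l := by
    rw [Real.sqrt_mul (by norm_num)]
    congr 1
    rw [show 2 * l = l * 2 by ring, pow_mul]
    exact Real.sqrt_sq (by positivity)
  rw [hden] at hz
  set D : ℝ := Real.sqrt 2 * 2 ^ l + 1 - Real.sqrt 2 with hD
  have hD1 : (1:ℝ) ≤ D := by
    nlinarith [mul_nonneg (le_trans zero_le_one hsqrt2) (sub_nonneg.mpr hNr)]
  have hD0 : (0:ℝ) < D := lt_of_lt_of_le one_pos hD1
  set r : ℝ := ‖z‖ with hr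
  have hr0 : (0:ℝ) ≤ r := norm_nonneg z
  have hrD : r * D ≤ 1 := (le_div_iff₀ hD0).mp hz
  have hr1 : r ≤ 1 := by nlinarith
  -- lower bound on nonzero elements
  have habs_lb : ∀ d ∈ ΔS, d ≠ 0 → (2:ℝ) ≤ ‖d‖ := by
    intro d hd hd0
    obtain ⟨a, b, hdab, _, _⟩ := hstruct d hd
    have hab : a ≠ 0 ∨ b ≠ 0 := by
      by_contra h
      push_neg at h
      apply hd0
      rw [hdab, h.1, h.2]; simp
    have h1 : (1:ℤ) ≤ a ^ 2 + b ^ 2 := by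
      rcases hab with ha | hb
      · have := Int.one_le_abs ha
        nlinarith [sq_nonneg b, sq_abs a]
      · have := Int.one_le_abs hb
        nlinarith [sq_nonneg a, sq_abs b]
    have h1' : (1:ℝ) ≤ (a:ℝ) ^ 2 + (b:ℝ) ^ 2 := by exact_mod_cast h1
    have hsq : ‖d‖ ^ 2 = 4 * ((a:ℝ)^2 + (b:ℝ)^2) := by
      rw [Complex.sq_norm, hdab, Complex.normSq_apply]
      simp
      ring
    nlinarith [norm_nonneg d]
  -- upper bound on all elements
  have habs_ub : ∀ d ∈ ΔS, ‖d‖ ≤ 2 * Real.sqrt 2 * ((2:ℝ)^l - 1) := by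
    intro d hd
    obtain ⟨a, b, hdab, haR, hbR⟩ := hstruct d hd
    have hsq : ‖d‖ ^ 2 = 4 * ((a:ℝ)^2 + (b:ℝ)^2) := by
      rw [Complex.sq_norm, hdab, Complex.normSq_apply]
      simp
      ring
    have ha2 : (a:ℝ)^2 ≤ ((2:ℝ)^l - 1)^2 := by
      have := mul_self_le_mul_self (abs_nonneg (a:ℝ)) haR
      nlinarith [sq_abs (a:ℝ)]
    have hb2 : (b:ℝ)^2 ≤ ((2:ℝ)^l - 1)^2 := by
      have := mul_self_le_mul_self (abs_nonneg (b:ℝ)) hbR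
      nlinarith [sq_abs (b:ℝ)]
    have h0 : (0:ℝ) ≤ 2 * Real.sqrt 2 * ((2:ℝ)^l - 1) := by
      have h2 : (0:ℝ) ≤ Real.sqrt 2 := Real.sqrt_nonneg 2
      nlinarith
    nlinarith [norm_nonneg d]
  -- conclude
  rw [hΓ]
  intro d hd d' hd' hne
  by_cases hd0 : d = 0
  · have hd'0 : d' ≠ 0 := fun h => hne ⟨hd0, h⟩
    have h2 : (2:ℝ) ≤ ‖d'‖ := habs_lb d' hd' hd'0
    subst hd0
    rw [zero_add, norm_mul]
    calc min 2 (‖z‖ * 2) ≤ ‖z‖ * 2 := min_le_right _ _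
      _ ≤ ‖z‖ * ‖d'‖ := by
          exact mul_le_mul_of_nonneg_left h2 hr0
  · have h2 : (2:ℝ) ≤ ‖d‖ := habs_lb d hd hd0
    have h3 : ‖d'‖ ≤ 2 * Real.sqrt 2 * ((2:ℝ)^l - 1) := habs_ub d' hd'
    have htri : ‖d‖ - ‖z‖ * ‖d'‖ ≤ ‖d + z * d'‖ := by
      have h := norm_sub_norm_le d (-(z * d'))
      simp only [norm_neg, sub_neg_eq_add] at h
      simpa [norm_mul] using h
    have hmin : min 2 (‖z‖ * 2) ≤ r * 2 := min_le_right _ _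
    have hkey : r * 2 ≤ ‖d‖ - r * ‖d'‖ := by
      have hrd' : r * ‖d'‖ ≤ r * (2 * Real.sqrt 2 * ((2:ℝ)^l - 1)) :=
        mul_le_mul_of_nonneg_left h3 hr0
      nlinarith
    calc min 2 (‖z‖ * 2) ≤ r * 2 := hmin
      _ ≤ ‖d‖ - r * ‖d'‖ := hkey
      _ ≤ ‖d + z * d'‖ := htri
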